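/- Let r ∈ C¹([0,∞),(0,∞)) with r(y) → +∞ as y → +∞, satisfying: (1) there is C₁ > 0 with ∫₀^y r(u)^{3/2} du ≤ C₁·y·r(y)^{3/2} for all large y; (2) there is C₂ > 0 with |r'(y)|·r(y)^{−5/2}·∫₀^y r(u)^{3/2} du ≤ C₂ for all large y; (3) r(y)^{1/2}/∫₀^y r(u)^{3/2} du → 0 as y → +∞. Fix a constant κ > 0 (in the paper κ = ‖A_{1,π/2}^{−1}‖, the operator norm of the inverse of the complex Airy operator −∂_x² + ix). Since y ↦ ∫₀^y r(u)^{3/2}du is a strictly increasing bijection of [0,∞) onto [0,∞), there is a unique function V₂ : [0,∞) → [0,∞) with κ^{−3/2}·∫₀^{V₂(x)} r(u)^{3/2} du = x for all x ≥ 0. Then V₂ is C², the purely imaginary potential V := i·V₂ satisfies Assumption (iR) with ν = −1 and l = 0, and for all sufficiently large b: κ·(V₂'(x_b))^{−2/3} = r(b), where x_b is defined by V₂(x_b) = b. -/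

import Mathlib

open MeasureTheory Filter

/-- The L² norm over the half-line (0,∞). -/
noncomputable def L2P (f : ℝ → ℂ) : ℝ :=
  (eLpNorm f 2 (volume.restrict (Set.Ioi (0:ℝ)))).toReal

/-- The L² norm over ℝ. -/
noncomputable def L2R (f : ℝ → ℂ) : ℝ :=
  (eLpNorm f 2 volume).toReal

/-- V₂ = Im V. -/
noncomputable def ImV (V : ℝ → ℂ) (x : ℝ) : ℝ := (V x).im

/-- V₁ = Re V. -/
noncomputable def ReV (V : ℝ → ℂ) (x : ℝ) : ℝ := (V x).re

/-- Υ(x) = x^ν · (V₂'(x))^(−1/3). -/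
noncomputable def Upsilon (V : ℝ → ℂ) (ν x : ℝ) : ℝ :=
  x ^ ν * deriv (ImV V) x ^ (-(1:ℝ)/3)

/-- The complex number ρ·e^{iθ}. -/
noncomputable def polarC (ρ θ : ℝ) : ℂ := (ρ : ℂ) * Complex.exp (Complex.I * (θ : ℂ))

/-- κ_b = |r·e^{iθ} − r_b·e^{iθ_b}| with r = √(l²+1), θ = arg(l+i),
r_b = √((V₁'(x_b)/V₂'(x_b))²+1), θ_b = arg(V₁'(x_b)/V₂'(x_b) + i). -/
noncomputable def kappaB (V : ℝ → ℂ) (l xb : ℝ) : ℝ :=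
  norm
    (polarC (Real.sqrt (l ^ 2 + 1)) (Complex.arg ((l : ℂ) + Complex.I)) -
      polarC (Real.sqrt ((deriv (ReV V) xb / deriv (ImV V) xb) ^ 2 + 1))
        (Complex.arg (((deriv (ReV V) xb / deriv (ImV V) xb : ℝ) : ℂ) + Complex.I)))

/-- κ(r,θ) = inf over nonzero C_c^∞ functions φ of ‖−φ'' + r e^{iθ} x φ‖/‖φ‖,
the reciprocal of the norm of the inverse of the complex Airy operator A_{r,θ}. -/
noncomputable def airyResInvNorm (ρ θ : ℝ) : ℝ :=
  sInf { c : ℝ | ∃ φ : ℝ → ℂ, ContDiff ℝ (⊤ : ℕ∞) φ ∧ HasCompactSupport φ ∧ φ ≠ 0 ∧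
    c = L2R (fun x => -(deriv (deriv φ) x) + polarC ρ θ * (x : ℂ) * φ x) / L2R φ }

/-- Assumption (iR): V locally bounded on [0,∞), C² on (x₀,∞), Re V ≥ 0 a.e.,
V₂ unbounded and eventually increasing, controlled derivatives with parameter ν,
Υ → 0, and V₁'/V₂' → l ∈ [0,∞). -/
structure AssumptionIR (V : ℝ → ℂ) (x₀ ν l : ℝ) : Prop where
  x0_nonneg : 0 ≤ x₀
  nu_ge : -1 ≤ ν
  l_nonneg : 0 ≤ l
  loc_bdd : ∀ K : Set ℝ, IsCompact K → ∃ M : ℝ, ∀ x ∈ K ∩ Set.Ici (0:ℝ), ‖V x‖ ≤ M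
  smooth : ContDiffOn ℝ 2 V (Set.Ioi x₀)
  re_nonneg : ∀ᵐ x ∂(volume.restrict (Set.Ioi (0:ℝ))), 0 ≤ (V x).re
  im_unbounded : Tendsto (ImV V) atTop atTop
  im_deriv_pos : ∀ x > x₀, 0 < deriv (ImV V) x
  controlled : ∃ c > 0, ∀ x > x₀,
      deriv (ImV V) x ≤ c * ImV V x * x ^ ν ∧
      ‖deriv (deriv V) x‖ ≤ c * deriv (ImV V) x * x ^ ν
  upsilon_small : Tendsto (fun x => Upsilon V ν x) atTop (nhds 0)
  ratio_lim : Tendsto (fun x => deriv (ReV V) x / deriv (ImV V) x) atTop (nhds l)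

/-- The defining equation of the potential realising the prescribed resolvent growth
rate r: V₂ : [0,∞) → [0,∞) with κ^{−3/2} ∫₀^{V₂(x)} r(u)^{3/2} du = x for x ≥ 0. -/
def DefiningEq (r : ℝ → ℝ) (κ : ℝ) (V₂ : ℝ → ℝ) : Prop :=
  (∀ x ≥ (0:ℝ), 0 ≤ V₂ x) ∧
    ∀ x ≥ (0:ℝ), κ ^ (-(3:ℝ)/2) * ∫ u in (0:ℝ)..(V₂ x), r u ^ ((3:ℝ)/2) = x

namespace St19

open Set Topology intervalIntegral

noncomputable def F (r : ℝ → ℝ) (y : ℝ) : ℝ := ∫ u in (0:ℝ)..y, r u ^ ((3:ℝ)/2)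

variable {r : ℝ → ℝ}

theorem hg_cont (hcont : ContinuousOn r (Set.Ici 0)) :
    ContinuousOn (fun u => r u ^ ((3:ℝ)/2)) (Set.Ici 0) :=
  hcont.rpow_const (fun _ _ => Or.inr (by norm_num))

theorem hg_pos (hpos : ∀ y ≥ (0:ℝ), 0 < r y) : ∀ u ∈ Set.Ici (0:ℝ), 0 < r u ^ ((3:ℝ)/2) :=
  fun u hu => Real.rpow_pos_of_pos (hpos u hu) _

theorem hg_int (hcont : ContinuousOn r (Set.Ici 0)) {a b : ℝ} (ha : 0 ≤ a) (hb : 0 ≤ b) :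
    IntervalIntegrable (fun u => r u ^ ((3:ℝ)/2)) volume a b :=
  ((hg_cont hcont).mono (by
    rcases le_total a b with h | h
    · rw [Set.uIcc_of_le h]; exact fun x hx => le_trans ha hx.1
    · rw [Set.uIcc_of_ge h]; exact fun x hx => le_trans hb hx.1)).intervalIntegrable

theorem hF_mono (hpos : ∀ y ≥ (0:ℝ), 0 < r y) (hcont : ContinuousOn r (Set.Ici 0)) :
    StrictMonoOn (F r) (Set.Ici 0) := by
  intro a ha b hb hab
  have h1 : F r b - F r a = ∫ u in a..b, r u ^ ((3:ℝ)/2) :=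
    integral_interval_sub_left (hg_int hcont le_rfl hb) (hg_int hcont le_rfl ha)
  have h2 : 0 < ∫ u in a..b, r u ^ ((3:ℝ)/2) := by
    apply intervalIntegral_pos_of_pos_on (hg_int hcont ha hb)
      (fun x hx => hg_pos hpos x (le_of_lt (lt_of_le_of_lt ha hx.1))) hab
  simp only [F] at *
  linarith

theorem hF0 : F r 0 = 0 := integral_same

theorem hF_nonneg (hpos : ∀ y ≥ (0:ℝ), 0 < r y) (hcont : ContinuousOn r (Set.Ici 0)) :
    ∀ y ≥ (0:ℝ), 0 ≤ F r y := by
  intro y hy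
  rcases eq_or_lt_of_le hy with h | h
  · rw [← h, hF0]
  · have := hF_mono hpos hcont (le_refl (0:ℝ)) hy.le h
    rw [hF0] at this; linarith [Set.mem_Ici.2 (le_refl (0:ℝ))]

theorem hF_derivWithin (hpos : ∀ y ≥ (0:ℝ), 0 < r y) (hcont : ContinuousOn r (Set.Ici 0)) :
    ∀ y ∈ Set.Ici (0:ℝ), HasDerivWithinAt (F r) (r y ^ ((3:ℝ)/2)) (Set.Ici 0) y := by
  intro y hy
  rcases eq_or_lt_of_le (Set.mem_Ici.mp hy : (0:ℝ) ≤ y) with h | h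
  · subst h
    exact integral_hasDerivWithinAt_right (hg_int hcont le_rfl le_rfl)
      (AEStronglyMeasurable.stronglyMeasurableAtFilter_of_mem
          (((hg_cont hcont).mono Set.Ioi_subset_Ici_self).aestronglyMeasurable
            measurableSet_Ioi) self_mem_nhdsWithin)
      (((hg_cont hcont) 0 Set.self_mem_Ici).mono Set.Ioi_subset_Ici_self)
  · have hat : HasDerivAt (F r) (r y ^ ((3:ℝ)/2)) y := by
      apply integral_hasDerivAt_right (hg_int hcont le_rfl h.le)
      · exact ContinuousOn.stronglyMeasurableAtFilter isOpen_Ioi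
          ((hg_cont hcont).mono Set.Ioi_subset_Ici_self) y h
      · exact ((hg_cont hcont) y hy).continuousAt (Ici_mem_nhds h)
    exact hat.hasDerivWithinAt

theorem hF_cont (hpos : ∀ y ≥ (0:ℝ), 0 < r y) (hcont : ContinuousOn r (Set.Ici 0)) :
    ContinuousOn (F r) (Set.Ici 0) :=
  fun y hy => (hF_derivWithin hpos hcont y hy).continuousWithinAt

theorem hF_top (hcont : ContinuousOn r (Set.Ici 0)) (hinfty : Tendsto r atTop atTop) :
    Tendsto (F r) atTop atTop := by
  obtain ⟨y₀, hy₀⟩ := (hinfty.eventually (eventually_ge_atTop (1:ℝ))).exists_forall_of_atTop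
  set z := max y₀ 0 with hz
  have hz0 : (0:ℝ) ≤ z := le_max_right _ _
  apply tendsto_atTop_mono' _ (_ : ∀ᶠ y in atTop, F r z + (y - z) ≤ F r y)
  · exact tendsto_atTop_add_const_left _ _ (tendsto_atTop_add_const_right _ _ tendsto_id)
  · filter_upwards [eventually_ge_atTop z] with y hy
    have h1 : F r y - F r z = ∫ u in z..y, r u ^ ((3:ℝ)/2) :=
      integral_interval_sub_left (hg_int hcont le_rfl (hz0.trans hy)) (hg_int hcont le_rfl hz0)
    have h2 : (y - z) ≤ ∫ u in z..y, r u ^ ((3:ℝ)/2) := by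
      have h3 : ∫ _u in z..y, (1:ℝ) ≤ ∫ u in z..y, r u ^ ((3:ℝ)/2) := by
        apply integral_mono_on hy intervalIntegrable_const (hg_int hcont hz0 (hz0.trans hy))
        intro x hx
        exact Real.one_le_rpow (hy₀ x (le_trans (le_max_left _ _) hx.1)) (by norm_num)
      simpa using h3
    linarith


variable {κ : ℝ} {V₂ : ℝ → ℝ}


theorem hk_pos (hκ : 0 < κ) : 0 < κ ^ ((3:ℝ)/2) := Real.rpow_pos_of_pos hκ _

theorem hk_inv (hκ : 0 < κ) : κ ^ (-(3:ℝ)/2) = (κ ^ ((3:ℝ)/2))⁻¹ := by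
  rw [neg_div, Real.rpow_neg hκ.le]

theorem hFV (hκ : 0 < κ) (hd : DefiningEq r κ V₂) :
    ∀ x ≥ (0:ℝ), F r (V₂ x) = κ ^ ((3:ℝ)/2) * x := by
  intro x hx
  have h := hd.2 x hx
  rw [hk_inv hκ, inv_mul_eq_iff_eq_mul₀ (ne_of_gt (hk_pos hκ))] at h
  exact h

/-- If `F r y < k x` then `y < V₂ x`. -/
theorem hV2_gt (hpos : ∀ y ≥ (0:ℝ), 0 < r y) (hcont : ContinuousOn r (Set.Ici 0))
    (hκ : 0 < κ) (hd : DefiningEq r κ V₂) {x y : ℝ} (hx : 0 ≤ x) (hy : 0 ≤ y)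
    (h : F r y < κ ^ ((3:ℝ)/2) * x) : y < V₂ x := by
  by_contra hle
  push_neg at hle
  have := (hF_mono hpos hcont).monotoneOn (hd.1 x hx) hy hle
  rw [hFV hκ hd x hx] at this
  linarith

/-- If `k x < F r y` then `V₂ x < y`. -/
theorem hV2_lt (hpos : ∀ y ≥ (0:ℝ), 0 < r y) (hcont : ContinuousOn r (Set.Ici 0))
    (hκ : 0 < κ) (hd : DefiningEq r κ V₂) {x y : ℝ} (hx : 0 ≤ x) (hy : 0 ≤ y)
    (h : κ ^ ((3:ℝ)/2) * x < F r y) : V₂ x < y := by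
  by_contra hle
  push_neg at hle
  have := (hF_mono hpos hcont).monotoneOn hy (hd.1 x hx) hle
  rw [hFV hκ hd x hx] at this
  linarith

theorem hV2_inj (hpos : ∀ y ≥ (0:ℝ), 0 < r y) (hcont : ContinuousOn r (Set.Ici 0))
    (hκ : 0 < κ) (hd : DefiningEq r κ V₂) {x x' : ℝ} (hx : 0 ≤ x) (hx' : 0 ≤ x')
    (h : V₂ x = V₂ x') : x = x' := by
  have h1 : κ ^ ((3:ℝ)/2) * x = κ ^ ((3:ℝ)/2) * x' := by
    rw [← hFV hκ hd x hx, ← hFV hκ hd x' hx', h]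
  exact mul_left_cancel₀ (ne_of_gt (hk_pos hκ)) h1

theorem hV2_contWithin (hpos : ∀ y ≥ (0:ℝ), 0 < r y) (hcont : ContinuousOn r (Set.Ici 0))
    (hκ : 0 < κ) (hd : DefiningEq r κ V₂) :
    ∀ xq ∈ Set.Ici (0:ℝ), ContinuousWithinAt V₂ (Set.Ici 0) xq := by
  intro xq hxq
  have hxq0 : (0:ℝ) ≤ xq := hxq
  have hk := hk_pos hκ
  rw [ContinuousWithinAt]
  apply tendsto_order.2
  constructor
  · intro a ha
    rcases lt_or_ge a 0 with h0 | h0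
    · filter_upwards [self_mem_nhdsWithin] with x hx
      exact lt_of_lt_of_le h0 (hd.1 x hx)
    · have hFa : F r a < κ ^ ((3:ℝ)/2) * xq := by
        rw [← hFV hκ hd xq hxq0]
        exact hF_mono hpos hcont h0 (hd.1 xq hxq0) ha
      have hc : F r a / κ ^ ((3:ℝ)/2) < xq := (div_lt_iff₀' hk).2 hFa
      filter_upwards [mem_nhdsWithin_of_mem_nhds (Ioi_mem_nhds hc), self_mem_nhdsWithin]
        with x h1 h2
      exact hV2_gt hpos hcont hκ hd h2 h0 ((div_lt_iff₀' hk).1 h1)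
  · intro b hb
    have hb0 : (0:ℝ) ≤ b := le_trans (hd.1 xq hxq0) hb.le
    have hFb : κ ^ ((3:ℝ)/2) * xq < F r b := by
      rw [← hFV hκ hd xq hxq0]
      exact hF_mono hpos hcont (hd.1 xq hxq0) hb0 hb
    have hc : xq < F r b / κ ^ ((3:ℝ)/2) := (lt_div_iff₀' hk).2 hFb
    filter_upwards [mem_nhdsWithin_of_mem_nhds (Iio_mem_nhds hc), self_mem_nhdsWithin]
      with x h1 h2
    exact hV2_lt hpos hcont hκ hd h2 hb0 ((lt_div_iff₀' hk).1 h1)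

theorem hV2_atTop (hpos : ∀ y ≥ (0:ℝ), 0 < r y) (hcont : ContinuousOn r (Set.Ici 0))
    (hκ : 0 < κ) (hd : DefiningEq r κ V₂) : Tendsto V₂ atTop atTop := by
  rw [tendsto_atTop]
  intro M
  set M' := max M 0 with hM'
  filter_upwards [eventually_gt_atTop (F r M' / κ ^ ((3:ℝ)/2)), eventually_ge_atTop (0:ℝ)]
    with x h1 h2
  have := hV2_gt hpos hcont hκ hd h2 (le_max_right M 0)
    ((div_lt_iff₀' (hk_pos hκ)).1 h1)
  exact le_trans (le_max_left M 0) this.le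

theorem hV2_hasDerivWithinAt (hpos : ∀ y ≥ (0:ℝ), 0 < r y)
    (hcont : ContinuousOn r (Set.Ici 0)) (hκ : 0 < κ) (hd : DefiningEq r κ V₂) :
    ∀ xq ∈ Set.Ici (0:ℝ),
      HasDerivWithinAt V₂ (κ ^ ((3:ℝ)/2) / r (V₂ xq) ^ ((3:ℝ)/2)) (Set.Ici 0) xq := by
  intro xq hxq
  have hxq0 : (0:ℝ) ≤ xq := hxq
  have hk := hk_pos hκ
  have hyq : V₂ xq ∈ Set.Ici (0:ℝ) := hd.1 xq hxq0
  have hgpos : 0 < r (V₂ xq) ^ ((3:ℝ)/2) := Real.rpow_pos_of_pos (hpos _ hyq) _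
  rw [hasDerivWithinAt_iff_tendsto_slope, div_eq_mul_inv]
  have hB : Tendsto (slope (F r) (V₂ xq)) (𝓝[Set.Ici 0 \ {V₂ xq}] (V₂ xq))
      (𝓝 (r (V₂ xq) ^ ((3:ℝ)/2))) :=
    hasDerivWithinAt_iff_tendsto_slope.1 (hF_derivWithin hpos hcont _ hyq)
  have hA : Tendsto V₂ (𝓝[Set.Ici 0 \ {xq}] xq) (𝓝[Set.Ici 0 \ {V₂ xq}] (V₂ xq)) := by
    rw [tendsto_nhdsWithin_iff]
    constructor
    · exact (hV2_contWithin hpos hcont hκ hd xq hxq).mono_left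
        (nhdsWithin_mono _ diff_subset)
    · filter_upwards [self_mem_nhdsWithin] with x hx
      refine ⟨hd.1 x hx.1, fun heq => hx.2 ?_⟩
      exact hV2_inj hpos hcont hκ hd hx.1 hxq0 heq
  have hC : Tendsto (fun x => κ ^ ((3:ℝ)/2) * (slope (F r) (V₂ xq) (V₂ x))⁻¹)
      (𝓝[Set.Ici 0 \ {xq}] xq) (𝓝 (κ ^ ((3:ℝ)/2) * (r (V₂ xq) ^ ((3:ℝ)/2))⁻¹)) :=
    (((hB.comp hA).inv₀ (ne_of_gt hgpos)).const_mul _)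
  apply hC.congr'
  filter_upwards [self_mem_nhdsWithin] with x hx
  have hx0 : (0:ℝ) ≤ x := hx.1
  have hxne : x - xq ≠ 0 := sub_ne_zero.2 hx.2
  have hyne : V₂ x - V₂ xq ≠ 0 :=
    sub_ne_zero.2 (fun heq => hx.2 (hV2_inj hpos hcont hκ hd hx0 hxq0 heq))
  have hkx : κ ^ ((3:ℝ)/2) * x - κ ^ ((3:ℝ)/2) * xq ≠ 0 := by
    rw [← mul_sub]; exact mul_ne_zero (ne_of_gt hk) hxne
  rw [slope_def_field, slope_def_field, hFV hκ hd x hx0, hFV hκ hd xq hxq0]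
  field_simp

theorem hV2_hasDerivAt (hpos : ∀ y ≥ (0:ℝ), 0 < r y)
    (hcont : ContinuousOn r (Set.Ici 0)) (hκ : 0 < κ) (hd : DefiningEq r κ V₂)
    {xq : ℝ} (hxq : 0 < xq) :
    HasDerivAt V₂ (κ ^ ((3:ℝ)/2) / r (V₂ xq) ^ ((3:ℝ)/2)) xq :=
  (hV2_hasDerivWithinAt hpos hcont hκ hd xq hxq.le).hasDerivAt (Ici_mem_nhds hxq)


-- NEW PART --

theorem hV2_contDiffOn (hpos : ∀ y ≥ (0:ℝ), 0 < r y) (hC1 : ContDiffOn ℝ 1 r (Set.Ici 0))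
    (hκ : 0 < κ) (hd : DefiningEq r κ V₂) : ContDiffOn ℝ 2 V₂ (Set.Ici 0) := by
  have hcont := hC1.continuousOn
  have hdiff : DifferentiableOn ℝ V₂ (Set.Ici 0) :=
    fun x hx => (hV2_hasDerivWithinAt hpos hcont hκ hd x hx).differentiableWithinAt
  have hder : ∀ x ∈ Set.Ici (0:ℝ), derivWithin V₂ (Set.Ici 0) x
      = κ ^ ((3:ℝ)/2) / r (V₂ x) ^ ((3:ℝ)/2) :=
    fun x hx => (hV2_hasDerivWithinAt hpos hcont hκ hd x hx).derivWithin
      (uniqueDiffOn_Ici 0 x hx)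
  have hmaps : Set.MapsTo V₂ (Set.Ici 0) (Set.Ici 0) := fun x hx => hd.1 x hx
  have hV2cont : ContinuousOn V₂ (Set.Ici 0) :=
    fun x hx => hV2_contWithin hpos hcont hκ hd x hx
  have hrne : ∀ x ∈ Set.Ici (0:ℝ), r (V₂ x) ≠ 0 := fun x hx => ne_of_gt (hpos _ (hd.1 x hx))
  have hgne : ∀ x ∈ Set.Ici (0:ℝ), r (V₂ x) ^ ((3:ℝ)/2) ≠ 0 :=
    fun x hx => ne_of_gt (Real.rpow_pos_of_pos (hpos _ (hd.1 x hx)) _)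
  have h1 : ContDiffOn ℝ 1 V₂ (Set.Ici 0) := by
    rw [show (1 : WithTop ℕ∞) = 0 + 1 from (zero_add 1).symm,
      contDiffOn_succ_iff_derivWithin (uniqueDiffOn_Ici 0)]
    refine ⟨hdiff, by simp, ?_⟩
    rw [contDiffOn_zero]
    refine ContinuousOn.congr ?_ hder
    exact continuousOn_const.div
      ((hcont.comp hV2cont hmaps).rpow_const (fun x hx => Or.inl (hrne x hx))) hgne
  rw [show (2 : WithTop ℕ∞) = 1 + 1 from one_add_one_eq_two.symm,
    contDiffOn_succ_iff_derivWithin (uniqueDiffOn_Ici 0)]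
  refine ⟨hdiff, by simp, ?_⟩
  refine ContDiffOn.congr ?_ hder
  exact contDiffOn_const.div
    ((hC1.comp h1 hmaps).rpow_const_of_ne hrne) hgne

theorem himv : ImV (fun x => Complex.I * Complex.ofReal (V₂ x)) = V₂ := by
  funext x; simp [ImV]

theorem hrev : ReV (fun x => Complex.I * Complex.ofReal (V₂ x)) = fun _ => (0:ℝ) := by
  funext x; simp [ReV]

theorem main_air (hκ : 0 < κ)
    (hpos : ∀ y ≥ (0:ℝ), 0 < r y)
    (hC1 : ContDiffOn ℝ 1 r (Set.Ici (0:ℝ)))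
    (h1 : ∃ C₁ > 0, ∀ᶠ y in atTop,
        (∫ u in (0:ℝ)..y, r u ^ ((3:ℝ)/2)) ≤ C₁ * y * r y ^ ((3:ℝ)/2))
    (h2 : ∃ C₂ > 0, ∀ᶠ y in atTop,
        |deriv r y| * r y ^ (-(5:ℝ)/2) * (∫ u in (0:ℝ)..y, r u ^ ((3:ℝ)/2)) ≤ C₂)
    (h3 : Tendsto (fun y => r y ^ ((1:ℝ)/2) / ∫ u in (0:ℝ)..y, r u ^ ((3:ℝ)/2))
        atTop (nhds 0))
    (hd : DefiningEq r κ V₂) :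
    ∃ x₀ : ℝ, AssumptionIR (fun x => Complex.I * Complex.ofReal (V₂ x)) x₀ (-1) 0 := by
  have hcont := hC1.continuousOn
  set k := κ ^ ((3:ℝ)/2) with hkdef
  have hk : 0 < k := hk_pos hκ
  obtain ⟨C₁, hC₁, h1'⟩ := h1
  obtain ⟨y₁, hy₁⟩ := eventually_atTop.1 h1'
  obtain ⟨C₂, hC₂, h2'⟩ := h2
  obtain ⟨y₂, hy₂⟩ := eventually_atTop.1 h2'
  set c : ℝ := C₁ + (3/2) * C₂ + 1 with hcdef
  have hc : 0 < c := by positivity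
  set y₀ : ℝ := max 1 (max y₁ y₂) with hy₀def
  have hy₀1 : (1:ℝ) ≤ y₀ := le_max_left _ _
  have hy₀0 : (0:ℝ) ≤ y₀ := le_trans zero_le_one hy₀1
  set x₀ : ℝ := F r y₀ / k with hx₀def
  have hFy₀ : 0 ≤ F r y₀ := hF_nonneg hpos hcont y₀ hy₀0
  have hx₀0 : 0 ≤ x₀ := div_nonneg hFy₀ hk.le
  -- key: for x > x₀, V₂ x > y₀
  have hkey : ∀ x > x₀, y₀ < V₂ x := by
    intro x hx
    have hx0 : 0 ≤ x := le_trans hx₀0 hx.le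
    exact hV2_gt hpos hcont hκ hd hx0 hy₀0 ((div_lt_iff₀' hk).1 hx)
  -- basic facts for x > x₀
  have hV2C2 := hV2_contDiffOn hpos hC1 hκ hd
  have hV2cont : ContinuousOn V₂ (Set.Ici 0) :=
    fun x hx => hV2_contWithin hpos hcont hκ hd x hx
  refine ⟨x₀, ?_, le_refl _, le_refl _, ?_, ?_, ?_, ?_, ?_, ?_, ?_, ?_⟩
  · exact hx₀0
  -- loc_bdd
  · intro K hK
    obtain ⟨M, hM⟩ := (hK.inter_right isClosed_Ici).exists_bound_of_continuousOn
      (continuousOn_const.mul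
        (Complex.continuous_ofReal.comp_continuousOn
          (hV2cont.mono Set.inter_subset_right)))
    exact ⟨M, hM⟩
  -- smooth
  · exact (contDiffOn_const.mul
      (Complex.ofRealCLM.contDiff.comp_contDiffOn hV2C2)).mono
      (fun x (hx : x₀ < x) => le_trans hx₀0 hx.le)
  -- re_nonneg
  · exact Filter.Eventually.of_forall (fun x => by simp)
  -- im_unbounded
  · rw [himv]; exact hV2_atTop hpos hcont hκ hd
  -- im_deriv_pos
  · intro x hx
    have hx0 : 0 < x := lt_of_le_of_lt hx₀0 hx
    rw [himv, (hV2_hasDerivAt hpos hcont hκ hd hx0).deriv]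
    exact div_pos hk (Real.rpow_pos_of_pos (hpos _ (hd.1 x hx0.le)) _)
  -- controlled
  · refine ⟨c, hc, fun x hx => ?_⟩
    have hx0 : 0 < x := lt_of_le_of_lt hx₀0 hx
    set y : ℝ := V₂ x with hy
    have hy0 : 1 ≤ y := le_trans hy₀1 (hkey x hx).le
    have hypos : 0 < y := lt_of_lt_of_le zero_lt_one hy0
    have hrp : 0 < r y := hpos y hypos.le
    have hgp : 0 < r y ^ ((3:ℝ)/2) := Real.rpow_pos_of_pos hrp _
    have hFy : F r y = k * x := hFV hκ hd x hx0.le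
    have hFypos : 0 < F r y := by rw [hFy]; positivity
    have hxinv : x ^ (-1:ℝ) = k / F r y := by
      rw [Real.rpow_neg_one, hFy, div_mul_cancel_left₀ (ne_of_gt hk)]
    have hDx : deriv V₂ x = k / r y ^ ((3:ℝ)/2) :=
      (hV2_hasDerivAt hpos hcont hκ hd hx0).deriv
    have hDpos : 0 < k / r y ^ ((3:ℝ)/2) := div_pos hk hgp
    constructor
    · -- first inequality
      rw [himv, hDx, hxinv]
      have hle1 : F r y ≤ C₁ * y * r y ^ ((3:ℝ)/2) :=
        hy₁ y (le_trans (le_trans (le_max_left y₁ y₂) (le_max_right 1 _)) (hkey x hx).le)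
      have hrhs : c * y * (k / F r y) = (c * y * k) / F r y := by ring
      rw [hrhs, div_le_div_iff₀ hgp hFypos]
      have hk1 : k * F r y ≤ k * (C₁ * y * r y ^ ((3:ℝ)/2)) :=
        mul_le_mul_of_nonneg_left hle1 hk.le
      nlinarith [mul_pos (mul_pos hk hypos) hgp, mul_pos hk hgp,
        mul_pos (mul_pos (mul_pos hC₂ hk) hypos) hgp]
    · -- second inequality
      rw [himv, hDx, hxinv]
      -- compute deriv (deriv V) x
      have hrda : ContDiffAt ℝ 1 r y :=
        (hC1 y hypos.le).contDiffAt (Ici_mem_nhds hypos)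
      have hrd : HasDerivAt r (deriv r y) y :=
        (hrda.differentiableAt one_ne_zero).hasDerivAt
      have hgd : HasDerivAt (fun u => r u ^ ((3:ℝ)/2))
          (deriv r y * ((3:ℝ)/2) * r y ^ ((3:ℝ)/2 - 1)) y :=
        hrd.rpow_const (Or.inl (ne_of_gt hrp))
      have hV2d := hV2_hasDerivAt hpos hcont hκ hd hx0
      have hcompd : HasDerivAt (fun t => r (V₂ t) ^ ((3:ℝ)/2))
          ((deriv r y * ((3:ℝ)/2) * r y ^ ((3:ℝ)/2 - 1)) * (k / r y ^ ((3:ℝ)/2))) x :=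
        hgd.comp x hV2d
      have hinvd : HasDerivAt (fun t => (r (V₂ t) ^ ((3:ℝ)/2))⁻¹)
          (-(((deriv r y * ((3:ℝ)/2) * r y ^ ((3:ℝ)/2 - 1)) * (k / r y ^ ((3:ℝ)/2))))
            / (r y ^ ((3:ℝ)/2))^2) x :=
        hcompd.inv (ne_of_gt hgp)
      set D' : ℝ := k * (-(((deriv r y * ((3:ℝ)/2) * r y ^ ((3:ℝ)/2 - 1))
          * (k / r y ^ ((3:ℝ)/2)))) / (r y ^ ((3:ℝ)/2))^2) with hD'def
      have hDd : HasDerivAt (fun t => k * (r (V₂ t) ^ ((3:ℝ)/2))⁻¹) D' x :=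
        hinvd.const_mul k
      -- deriv V = I * D on Ioi 0
      have hVev : ∀ t ∈ Set.Ioi (0:ℝ),
          deriv (fun s => Complex.I * Complex.ofReal (V₂ s)) t
            = Complex.I * Complex.ofReal (k * (r (V₂ t) ^ ((3:ℝ)/2))⁻¹) := by
        intro t ht
        have hV2dt := hV2_hasDerivAt hpos hcont hκ hd ht
        have := (hV2dt.ofReal_comp).const_mul Complex.I
        rw [this.deriv]
        norm_num [div_eq_mul_inv]
        exact Or.inl hkdef.symm
      have hdd : deriv (deriv (fun s => Complex.I * Complex.ofReal (V₂ s))) x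
          = Complex.I * Complex.ofReal D' := by
        have hev : deriv (fun s => Complex.I * Complex.ofReal (V₂ s))
            =ᶠ[𝓝 x] fun t => Complex.I * Complex.ofReal (k * (r (V₂ t) ^ ((3:ℝ)/2))⁻¹) :=
          eventually_of_mem (Ioi_mem_nhds hx0) hVev
        rw [hev.deriv_eq]
        exact ((hDd.ofReal_comp).const_mul Complex.I).deriv
      rw [hdd]
      have hnorm : ‖Complex.I * Complex.ofReal D'‖ = |D'| := by
        rw [norm_mul, Complex.norm_I, one_mul, Complex.norm_real, Real.norm_eq_abs]
      rw [hnorm]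
      -- now the real inequality
      have hsq : (r y ^ ((3:ℝ)/2))^2 = r y ^ (3:ℝ) := by
        rw [← Real.rpow_natCast (r y ^ ((3:ℝ)/2)) 2, ← Real.rpow_mul hrp.le]
        norm_num
      have habs : |D'| = ((3:ℝ)/2 * k * (k / r y ^ ((3:ℝ)/2))
          * (r y ^ (-(5:ℝ)/2))) * |deriv r y| := by
        have hform : D' = ((3:ℝ)/2 * k * (k / r y ^ ((3:ℝ)/2))
            * (r y ^ ((3:ℝ)/2 - 1) / (r y ^ ((3:ℝ)/2))^2)) * (-(deriv r y)) := by
          rw [hD'def]; ring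
        have hrw : r y ^ ((3:ℝ)/2 - 1) / (r y ^ ((3:ℝ)/2))^2 = r y ^ (-(5:ℝ)/2) := by
          rw [hsq, ← Real.rpow_sub hrp]
          norm_num
        rw [hform, hrw, abs_mul, abs_neg, abs_of_nonneg (by positivity)]
      rw [habs]
      have hle2 : |deriv r y| * r y ^ (-(5:ℝ)/2) * F r y ≤ C₂ :=
        hy₂ y (le_trans (le_trans (le_max_right y₁ y₂) (le_max_right 1 _)) (hkey x hx).le)
      have hrhs : c * (k / r y ^ ((3:ℝ)/2)) * (k / F r y)
          = (c * (k / r y ^ ((3:ℝ)/2)) * k) / F r y := by ring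
      rw [hrhs, le_div_iff₀ hFypos]
      have hr52 : 0 < r y ^ (-(5:ℝ)/2) := Real.rpow_pos_of_pos hrp _
      have hmul : ((3:ℝ)/2 * k * (k / r y ^ ((3:ℝ)/2)))
          * (|deriv r y| * r y ^ (-(5:ℝ)/2) * F r y)
          ≤ ((3:ℝ)/2 * k * (k / r y ^ ((3:ℝ)/2))) * C₂ :=
        mul_le_mul_of_nonneg_left hle2 (by positivity)
      nlinarith [mul_pos hk hDpos, mul_pos (mul_pos hk hDpos) hC₂]
  -- upsilon_small
  · have hmain : Tendsto (fun x => κ * (r (V₂ x) ^ ((1:ℝ)/2)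
        / ∫ u in (0:ℝ)..(V₂ x), r u ^ ((3:ℝ)/2))) atTop (𝓝 (κ * 0)) :=
      (h3.comp (hV2_atTop hpos hcont hκ hd)).const_mul κ
    rw [mul_zero] at hmain
    apply hmain.congr'
    filter_upwards [eventually_gt_atTop x₀, eventually_gt_atTop 0] with x hx hxp
    set y : ℝ := V₂ x with hydef
    have hy0 : 1 ≤ y := le_trans hy₀1 (hkey x hx).le
    have hypos : 0 < y := lt_of_lt_of_le zero_lt_one hy0
    have hrp : 0 < r y := hpos y hypos.le
    have hgp : 0 < r y ^ ((3:ℝ)/2) := Real.rpow_pos_of_pos hrp _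
    have hFy : F r y = k * x := hFV hκ hd x hxp.le
    have hFypos : 0 < F r y := by rw [hFy]; positivity
    have hxinv : x ^ (-1:ℝ) = k / F r y := by
      rw [Real.rpow_neg_one, hFy, div_mul_cancel_left₀ (ne_of_gt hk)]
    have hDx : deriv V₂ x = k / r y ^ ((3:ℝ)/2) :=
      (hV2_hasDerivAt hpos hcont hκ hd hxp).deriv
    have hpow : (k / r y ^ ((3:ℝ)/2)) ^ (-(1:ℝ)/3)
        = κ ^ (-(1:ℝ)/2) * r y ^ ((1:ℝ)/2) := by
      rw [div_eq_mul_inv, Real.mul_rpow hk.le (by positivity),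
        ← Real.rpow_neg_one (r y ^ ((3:ℝ)/2)), hkdef,
        ← Real.rpow_mul hκ.le, ← Real.rpow_mul hrp.le, ← Real.rpow_mul hrp.le]
      norm_num
    symm
    rw [Upsilon, himv, hDx, hpow, hxinv]
    have hFint : F r y = ∫ u in (0:ℝ)..y, r u ^ ((3:ℝ)/2) := rfl
    rw [← hFint]
    have hkk : κ ^ ((3:ℝ)/2) * κ ^ (-(1:ℝ)/2) = κ := by
      rw [← Real.rpow_add hκ]; norm_num
    have hre : k / F r y * (κ ^ (-(1:ℝ)/2) * r y ^ ((1:ℝ)/2))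
        = (k * κ ^ (-(1:ℝ)/2)) * (r y ^ ((1:ℝ)/2) / F r y) := by ring
    rw [hre, hkdef, hkk]
  -- ratio_lim
  · have : (fun x => deriv (ReV (fun s => Complex.I * Complex.ofReal (V₂ s))) x
        / deriv (ImV (fun s => Complex.I * Complex.ofReal (V₂ s))) x) = fun _ => (0:ℝ) := by
      funext x
      rw [hrev]
      simp
    rw [this]
    exact tendsto_const_nhds

theorem hfinal (hpos : ∀ y ≥ (0:ℝ), 0 < r y) (hcont : ContinuousOn r (Set.Ici 0))
    (hκ : 0 < κ) (hd : DefiningEq r κ V₂) :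
    ∀ b ≥ (1:ℝ), ∀ xb ≥ (0:ℝ), V₂ xb = b →
      κ * deriv V₂ xb ^ (-(2:ℝ)/3) = r b := by
  intro b hb xb hxb hVb
  have hb0 : (0:ℝ) < b := lt_of_lt_of_le one_pos hb
  have hFb : F r b = κ ^ ((3:ℝ)/2) * xb := by rw [← hVb]; exact hFV hκ hd xb hxb
  have hFbpos : 0 < F r b := by
    have := hF_mono hpos hcont Set.self_mem_Ici (Set.mem_Ici.2 hb0.le) hb0
    rwa [hF0] at this
  have hxb0 : 0 < xb := by nlinarith [hk_pos hκ]
  have hrb : 0 < r b := hpos b hb0.le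
  have hder : deriv V₂ xb = κ ^ ((3:ℝ)/2) / r b ^ ((3:ℝ)/2) := by
    rw [(hV2_hasDerivAt hpos hcont hκ hd hxb0).deriv, hVb]
  rw [hder, div_eq_mul_inv, Real.mul_rpow (hk_pos hκ).le (by positivity),
    ← Real.rpow_neg_one (r b ^ ((3:ℝ)/2)), ← Real.rpow_mul hκ.le,
    ← Real.rpow_mul hrb.le, ← Real.rpow_mul hrb.le]
  norm_num
  rw [Real.rpow_neg_one]
  field_simp

theorem hexists (hpos : ∀ y ≥ (0:ℝ), 0 < r y) (hcont : ContinuousOn r (Set.Ici 0))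
    (hinfty : Tendsto r atTop atTop) (hκ : 0 < κ) :
    ∃ V₂ : ℝ → ℝ, DefiningEq r κ V₂ := by
  have hex : ∀ x : ℝ, 0 ≤ x → ∃ y, 0 ≤ y ∧ F r y = κ ^ ((3:ℝ)/2) * x := by
    intro x hx
    obtain ⟨Y, hY1, hY0⟩ := ((hF_top hcont hinfty).eventually
      (eventually_ge_atTop (κ ^ ((3:ℝ)/2) * x))).and (eventually_ge_atTop (0:ℝ))
      |>.exists
    have hc : ContinuousOn (F r) (Set.Icc 0 Y) :=
      (hF_cont hpos hcont).mono (Set.Icc_subset_Ici_self)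
    have hmem : κ ^ ((3:ℝ)/2) * x ∈ Set.Icc (F r 0) (F r Y) := by
      rw [hF0]
      exact ⟨by positivity, hY1⟩
    obtain ⟨y, hy, hFy⟩ := intermediate_value_Icc hY0 hc hmem
    exact ⟨y, hy.1, hFy⟩
  refine ⟨fun x => if hx : 0 ≤ x then (hex x hx).choose else 0, fun x hx => ?_, fun x hx => ?_⟩
  · simp only [dif_pos hx]; exact (hex x hx).choose_spec.1
  · simp only [dif_pos hx]; rw [hk_inv hκ]
    show (κ ^ ((3:ℝ)/2))⁻¹ * F r ((hex x hx).choose) = x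
    rw [(hex x hx).choose_spec.2, inv_mul_cancel_left₀ (ne_of_gt (hk_pos hκ))]


end St19

/-- first part of Proposition `prop:batty`: given a rate r satisfying
conditions (1)–(3), there exists a unique V₂ : [0,∞) → [0,∞) solving the defining
equation; this V₂ is C², the potential V = iV₂ satisfies Assumption (iR) with
ν = −1 and l = 0, and κ·(V₂'(x_b))^{−2/3} = r(b) for all large b, where V₂(x_b) = b. -/

theorem statement19 (r : ℝ → ℝ) (κ : ℝ) (hκ : 0 < κ)
    (hpos : ∀ y ≥ (0:ℝ), 0 < r y)
    (hC1 : ContDiffOn ℝ 1 r (Set.Ici (0:ℝ)))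
    (hinfty : Tendsto r atTop atTop)
    (h1 : ∃ C₁ > 0, ∀ᶠ y in atTop,
        (∫ u in (0:ℝ)..y, r u ^ ((3:ℝ)/2)) ≤ C₁ * y * r y ^ ((3:ℝ)/2))
    (h2 : ∃ C₂ > 0, ∀ᶠ y in atTop,
        |deriv r y| * r y ^ (-(5:ℝ)/2) * (∫ u in (0:ℝ)..y, r u ^ ((3:ℝ)/2)) ≤ C₂)
    (h3 : Tendsto (fun y => r y ^ ((1:ℝ)/2) / ∫ u in (0:ℝ)..y, r u ^ ((3:ℝ)/2))
        atTop (nhds 0)) :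
    (∃ V₂ : ℝ → ℝ, DefiningEq r κ V₂) ∧
    (∀ V₂ W₂ : ℝ → ℝ, DefiningEq r κ V₂ → DefiningEq r κ W₂ → ∀ x ≥ (0:ℝ), V₂ x = W₂ x) ∧
    (∀ V₂ : ℝ → ℝ, DefiningEq r κ V₂ →
      ContDiffOn ℝ 2 V₂ (Set.Ici (0:ℝ)) ∧
      (∃ x₀ : ℝ, AssumptionIR (fun x => Complex.I * Complex.ofReal (V₂ x)) x₀ (-1) 0) ∧
      (∃ b₀ : ℝ, ∀ b ≥ b₀, ∀ xb ≥ (0:ℝ), V₂ xb = b →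
        κ * deriv V₂ xb ^ (-(2:ℝ)/3) = r b)) := by
  have hcont := hC1.continuousOn
  refine ⟨St19.hexists hpos hcont hinfty hκ, ?_, ?_⟩
  · intro V₂ W₂ hdV hdW x hx
    exact (St19.hF_mono hpos hcont).injOn (hdV.1 x hx) (hdW.1 x hx)
      (by rw [St19.hFV hκ hdV x hx, St19.hFV hκ hdW x hx])
  · intro V₂ hd
    exact ⟨St19.hV2_contDiffOn hpos hC1 hκ hd,
      St19.main_air hκ hpos hC1 h1 h2 h3 hd,
      ⟨1, St19.hfinal hpos hcont hκ hd⟩⟩
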